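/- Let K be an algebraically closed field of characteristic zero, d ≥ 1, and A = K⟨v1,…,vd⟩ the free associative K-algebra. If ⟪-,-⟫ is a mixed double Poisson algebra structure on A of weight λ = (λ1,…,λd) ∈ K^d, then for all 1≤i,j≤d and every c ∈ A one has −⟪v_j,⟪v_i,c⟫⟫_L + ⟪v_i,⟪v_j,c⟫⟫_R − ⟪⟪v_i,v_j⟫°,c⟫_L = ((λ_j+λ_i)/2)·(v_j ⊗₁ ⟪v_i,c⟫) + ((λ_j−λ_i)/2)·(1 ⊗₁ (⟪v_i,c⟫ ∗ v_j)). -/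

import Mathlib

open TensorProduct

noncomputable section

variable (K : Type*) [Field K]
variable (A : Type*) [Ring A] [Algebra K A]

/-- Leibniz rules for a double-bracket-type operation. -/
def LeibnizRules (D : A ⊗[K] A →ₗ[K] A ⊗[K] A) : Prop :=
  (∀ a b c : A,
      D (a ⊗ₜ[K] (b * c)) =
        (b ⊗ₜ[K] (1 : A)) * D (a ⊗ₜ[K] c) + D (a ⊗ₜ[K] b) * ((1 : A) ⊗ₜ[K] c))
  ∧ (∀ a b c : A,
      D ((a * b) ⊗ₜ[K] c) =
        ((1 : A) ⊗ₜ[K] a) * D (b ⊗ₜ[K] c) + D (a ⊗ₜ[K] c) * (b ⊗ₜ[K] (1 : A)))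

/-- The associated bracket `{a,b} = m(⟪a,b⟫)`. -/
def br (D : A ⊗[K] A →ₗ[K] A ⊗[K] A) (a b : A) : A :=
  LinearMap.mul' K A (D (a ⊗ₜ[K] b))

/-- The K-span of commutators `[A,A]`. -/
def commutatorSpan : Submodule K A :=
  Submodule.span K {x : A | ∃ a b : A, x = a * b - b * a}

/-- The flip on `A ⊗ A`. -/
def flipT : A ⊗[K] A →ₗ[K] A ⊗[K] A := (TensorProduct.comm K A A).toLinearMap

/-- Swap of the last two tensor factors of `(A ⊗ A) ⊗ A`. -/
def swap23 : ((A ⊗[K] A) ⊗[K] A) →ₗ[K] ((A ⊗[K] A) ⊗[K] A) :=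
  (TensorProduct.assoc K A A A).symm.toLinearMap ∘ₗ
    (LinearMap.lTensor A (TensorProduct.comm K A A).toLinearMap) ∘ₗ
    (TensorProduct.assoc K A A A).toLinearMap

/-- `⟪a, -⟫_L` on double tensors: `b ⊗ c ↦ ⟪a,b⟫ ⊗ c`. -/
def dL (D : A ⊗[K] A →ₗ[K] A ⊗[K] A) (a : A) :
    A ⊗[K] A →ₗ[K] (A ⊗[K] A) ⊗[K] A :=
  LinearMap.rTensor A (D ∘ₗ TensorProduct.mk K A A a)

/-- `⟪a, -⟫_R` on double tensors: `b ⊗ c ↦ b ⊗ ⟪a,c⟫`. -/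
def dR (D : A ⊗[K] A →ₗ[K] A ⊗[K] A) (a : A) :
    A ⊗[K] A →ₗ[K] (A ⊗[K] A) ⊗[K] A :=
  (TensorProduct.assoc K A A A).symm.toLinearMap ∘ₗ
    LinearMap.lTensor A (D ∘ₗ TensorProduct.mk K A A a)

/-- `⟪-, c⟫_L` on double tensors: `b ⊗ b' ↦ ⟪b,c⟫' ⊗ b' ⊗ ⟪b,c⟫''`. -/
def dLfst (D : A ⊗[K] A →ₗ[K] A ⊗[K] A) (c : A) :
    A ⊗[K] A →ₗ[K] (A ⊗[K] A) ⊗[K] A :=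
  swap23 K A ∘ₗ LinearMap.rTensor A (D ∘ₗ (TensorProduct.mk K A A).flip c)

/-- The double Jacobiator. -/
def DJac (D : A ⊗[K] A →ₗ[K] A ⊗[K] A) (a b c : A) : (A ⊗[K] A) ⊗[K] A :=
  dL K A D a (D (b ⊗ₜ[K] c)) - dR K A D b (D (a ⊗ₜ[K] c)) - dLfst K A D c (D (a ⊗ₜ[K] b))

/-- `c ⊗₁ (-)` : `w' ⊗ w'' ↦ w' ⊗ c ⊗ w''`. -/
def otimes1 (c : A) : A ⊗[K] A →ₗ[K] (A ⊗[K] A) ⊗[K] A :=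
  LinearMap.rTensor A ((TensorProduct.mk K A A).flip c)

variable {ι : Type*}

/-- Mixed double algebra structure of weight `lam` with respect to the generators `v`. -/
def IsMixedDouble (v : ι → A) (lam : ι → K) (D : A ⊗[K] A →ₗ[K] A ⊗[K] A) : Prop :=
  LeibnizRules K A D ∧
  ∀ i j : ι,
    D (v i ⊗ₜ[K] v j) + flipT K A (D (v j ⊗ₜ[K] v i)) =
      ((lam i + lam j) / 2) • (v i ⊗ₜ[K] v j - v j ⊗ₜ[K] v i) +
      ((lam i - lam j) / 2) • ((1 : A) ⊗ₜ[K] (v i * v j) - (v j * v i) ⊗ₜ[K] (1 : A))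

/-- Mixed double Poisson algebra structure of weight `lam` w.r.t. the generators `v`. -/
def IsMixedDoublePoisson (v : ι → A) (lam : ι → K) (D : A ⊗[K] A →ₗ[K] A ⊗[K] A) : Prop :=
  IsMixedDouble K A v lam D ∧
  ∀ i j k : ι,
    DJac K A D (v i) (v j) (v k) =
      (-((lam i + lam j) / 2)) • otimes1 K A (v j) (D (v i ⊗ₜ[K] v k)) +
      ((lam i - lam j) / 2) •
        otimes1 K A (1 : A) (((1 : A) ⊗ₜ[K] v j) * D (v i ⊗ₜ[K] v k))

/-- Modified double Poisson bracket. -/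
def IsModifiedDoublePoisson (D : A ⊗[K] A →ₗ[K] A ⊗[K] A) : Prop :=
  LeibnizRules K A D ∧
  (∀ a b : A, br K A D a b + br K A D b a ∈ commutatorSpan K A) ∧
  (∀ a b c : A,
    br K A D a (br K A D b c) - br K A D b (br K A D a c) - br K A D (br K A D a b) c = 0)

end
section Aux

variable {K : Type*} [Field K]
variable {A : Type*} [Ring A] [Algebra K A]
variable (D : A ⊗[K] A →ₗ[K] A ⊗[K] A)

lemma dL_tmul (a p q : A) : dL K A D a (p ⊗ₜ[K] q) = D (a ⊗ₜ[K] p) ⊗ₜ[K] q := rfl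

lemma dR_tmul (a p q : A) :
    dR K A D a (p ⊗ₜ[K] q) = (TensorProduct.assoc K A A A).symm (p ⊗ₜ[K] D (a ⊗ₜ[K] q)) := rfl

lemma dLfst_tmul (c p q : A) :
    dLfst K A D c (p ⊗ₜ[K] q) = swap23 K A (D (p ⊗ₜ[K] c) ⊗ₜ[K] q) := rfl

lemma otimes1_tmul (c p q : A) : otimes1 K A c (p ⊗ₜ[K] q) = (p ⊗ₜ[K] c) ⊗ₜ[K] q := rfl

lemma flipT_tmul (p q : A) : flipT K A (p ⊗ₜ[K] q) = q ⊗ₜ[K] p := rfl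

lemma swap23_tmul (p q r : A) : swap23 K A ((p ⊗ₜ[K] q) ⊗ₜ[K] r) = (p ⊗ₜ[K] r) ⊗ₜ[K] q := rfl

/-- cross map: (s'⊗s'') ⊗ (u'⊗u'') ↦ (s' ⊗ s''u') ⊗ u''. -/
noncomputable def crossMap : ((A ⊗[K] A) ⊗[K] (A ⊗[K] A)) →ₗ[K] ((A ⊗[K] A) ⊗[K] A) :=
  LinearMap.rTensor A
      (LinearMap.lTensor A (LinearMap.mul' K A) ∘ₗ (TensorProduct.assoc K A A A).toLinearMap) ∘ₗ
    (TensorProduct.assoc K (A ⊗[K] A) A A).symm.toLinearMap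

lemma crossMap_tmul (s' s'' u' u'' : A) :
    crossMap ((s' ⊗ₜ[K] s'') ⊗ₜ[K] (u' ⊗ₜ[K] u'')) = (s' ⊗ₜ[K] (s'' * u')) ⊗ₜ[K] u'' := rfl

lemma swap23_eq_otimes1 (s : A ⊗[K] A) (r : A) :
    swap23 K A (s ⊗ₜ[K] r) = otimes1 K A r s := by
  induction s using TensorProduct.induction_on with
  | zero => simp
  | tmul p q => rfl
  | add u v hu hv => rw [TensorProduct.add_tmul, map_add, map_add, hu, hv]

-- pure element multiplication helpers in the triple tensor algebra
lemma mul_oneone_tmul (s : A ⊗[K] A) (p q : A) :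
    (s * ((1 : A) ⊗ₜ[K] p)) ⊗ₜ[K] q = crossMap (s ⊗ₜ[K] (p ⊗ₜ[K] q)) := by
  induction s using TensorProduct.induction_on with
  | zero => simp
  | tmul s' s'' => simp [Algebra.TensorProduct.tmul_mul_tmul, crossMap_tmul]
  | add u v hu hv => rw [add_mul, TensorProduct.add_tmul, hu, TensorProduct.add_tmul, map_add, hv]

lemma tmul_mul_left (b : A) (s : A ⊗[K] A) (q : A) :
    (((b ⊗ₜ[K] (1 : A)) * s) ⊗ₜ[K] q)
      = ((b ⊗ₜ[K] (1 : A)) ⊗ₜ[K] (1 : A)) * (s ⊗ₜ[K] q) := by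
  rw [Algebra.TensorProduct.tmul_mul_tmul, one_mul]

lemma tmul_mul_right (c : A) (s : A ⊗[K] A) (q : A) :
    (s ⊗ₜ[K] (q * c))
      = (s ⊗ₜ[K] q) * (((1 : A) ⊗ₜ[K] (1 : A)) ⊗ₜ[K] c) := by
  rw [Algebra.TensorProduct.tmul_mul_tmul, ← Algebra.TensorProduct.one_def, mul_one]

end Aux
section Aux2
set_option synthInstance.maxHeartbeats 800000

variable {K : Type*} [Field K]
variable {A : Type*} [Ring A] [Algebra K A]
variable {D : A ⊗[K] A →ₗ[K] A ⊗[K] A}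

variable (hL1 : ∀ a b c : A,
    D (a ⊗ₜ[K] (b * c)) =
      (b ⊗ₜ[K] (1 : A)) * D (a ⊗ₜ[K] c) + D (a ⊗ₜ[K] b) * ((1 : A) ⊗ₜ[K] c))
variable (hL2 : ∀ a b c : A,
    D ((a * b) ⊗ₜ[K] c) =
      ((1 : A) ⊗ₜ[K] a) * D (b ⊗ₜ[K] c) + D (a ⊗ₜ[K] c) * (b ⊗ₜ[K] (1 : A)))

include hL1 in
lemma D_tmul_one (a : A) : D (a ⊗ₜ[K] (1 : A)) = 0 := by
  have h := hL1 a 1 1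
  rw [one_mul, ← Algebra.TensorProduct.one_def, one_mul, mul_one] at h
  exact (right_eq_add.mp h)

include hL2 in
lemma D_one_tmul (c : A) : D ((1 : A) ⊗ₜ[K] c) = 0 := by
  have h := hL2 1 1 c
  rw [one_mul, ← Algebra.TensorProduct.one_def, one_mul, mul_one] at h
  exact (right_eq_add.mp h)

include hL1 in
lemma D_tmul_algebraMap (a : A) (r : K) : D (a ⊗ₜ[K] (algebraMap K A r)) = 0 := by
  rw [Algebra.algebraMap_eq_smul_one, TensorProduct.tmul_smul, map_smul,
    D_tmul_one hL1, smul_zero]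

lemma asymm_mul_left (b p : A) (s : A ⊗[K] A) :
    (TensorProduct.assoc K A A A).symm ((b * p) ⊗ₜ[K] s) =
      ((b ⊗ₜ[K] (1 : A)) ⊗ₜ[K] (1 : A)) * (TensorProduct.assoc K A A A).symm (p ⊗ₜ[K] s) := by
  induction s using TensorProduct.induction_on with
  | zero => simp
  | tmul s' s'' => simp [TensorProduct.assoc_symm_tmul, Algebra.TensorProduct.tmul_mul_tmul]
  | add u v hu hv =>
      rw [TensorProduct.tmul_add, TensorProduct.tmul_add, map_add, map_add, hu, hv, mul_add]

lemma asymm_mul_right (c p : A) (s : A ⊗[K] A) :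
    (TensorProduct.assoc K A A A).symm (p ⊗ₜ[K] (s * ((1 : A) ⊗ₜ[K] c))) =
      (TensorProduct.assoc K A A A).symm (p ⊗ₜ[K] s) * (((1 : A) ⊗ₜ[K] (1 : A)) ⊗ₜ[K] c) := by
  induction s using TensorProduct.induction_on with
  | zero => simp
  | tmul s' s'' => simp [Algebra.TensorProduct.tmul_mul_tmul, TensorProduct.assoc_symm_tmul]
  | add u v hu hv =>
      rw [add_mul, TensorProduct.tmul_add, map_add, hu, hv, TensorProduct.tmul_add, map_add,
        add_mul]

lemma asymm_cross (p q : A) (t : A ⊗[K] A) :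
    (TensorProduct.assoc K A A A).symm (p ⊗ₜ[K] ((q ⊗ₜ[K] (1 : A)) * t)) =
      crossMap ((p ⊗ₜ[K] q) ⊗ₜ[K] t) := by
  induction t using TensorProduct.induction_on with
  | zero => simp
  | tmul t' t'' =>
      simp [Algebra.TensorProduct.tmul_mul_tmul, TensorProduct.assoc_symm_tmul, crossMap_tmul]
  | add u v hu hv =>
      rw [mul_add, TensorProduct.tmul_add, map_add, hu, hv, TensorProduct.tmul_add, map_add]

lemma swap23_mul_left (b : A) (s : A ⊗[K] A) (r : A) :
    swap23 K A (((b ⊗ₜ[K] (1 : A)) * s) ⊗ₜ[K] r) =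
      ((b ⊗ₜ[K] (1 : A)) ⊗ₜ[K] (1 : A)) * swap23 K A (s ⊗ₜ[K] r) := by
  induction s using TensorProduct.induction_on with
  | zero => simp
  | tmul s' s'' =>
      simp [Algebra.TensorProduct.tmul_mul_tmul, swap23_tmul]
  | add u v hu hv =>
      rw [mul_add, TensorProduct.add_tmul, map_add, hu, hv, TensorProduct.add_tmul, map_add,
        mul_add]

lemma swap23_mul_right (c : A) (s : A ⊗[K] A) (r : A) :
    swap23 K A ((s * ((1 : A) ⊗ₜ[K] c)) ⊗ₜ[K] r) =
      swap23 K A (s ⊗ₜ[K] r) * (((1 : A) ⊗ₜ[K] (1 : A)) ⊗ₜ[K] c) := by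
  induction s using TensorProduct.induction_on with
  | zero => simp
  | tmul s' s'' =>
      simp [Algebra.TensorProduct.tmul_mul_tmul, swap23_tmul]
  | add u v hu hv =>
      rw [add_mul, TensorProduct.add_tmul, map_add, hu, hv, TensorProduct.add_tmul, map_add,
        add_mul]

lemma otimes1_mul_left (r b : A) (u : A ⊗[K] A) :
    otimes1 K A r ((b ⊗ₜ[K] (1 : A)) * u) =
      ((b ⊗ₜ[K] (1 : A)) ⊗ₜ[K] (1 : A)) * otimes1 K A r u := by
  induction u using TensorProduct.induction_on with
  | zero => simp
  | tmul p q => simp [Algebra.TensorProduct.tmul_mul_tmul, otimes1_tmul]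
  | add u v hu hv => rw [mul_add, map_add, hu, hv, map_add, mul_add]

lemma otimes1_mul_right (r c : A) (u : A ⊗[K] A) :
    otimes1 K A r (u * ((1 : A) ⊗ₜ[K] c)) =
      otimes1 K A r u * (((1 : A) ⊗ₜ[K] (1 : A)) ⊗ₜ[K] c) := by
  induction u using TensorProduct.induction_on with
  | zero => simp
  | tmul p q => simp [Algebra.TensorProduct.tmul_mul_tmul, otimes1_tmul]
  | add u v hu hv => rw [add_mul, map_add, hu, hv, map_add, add_mul]

include hL1 in
lemma dL_mul_left (a b : A) (u : A ⊗[K] A) :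
    dL K A D a ((b ⊗ₜ[K] (1 : A)) * u) =
      ((b ⊗ₜ[K] (1 : A)) ⊗ₜ[K] (1 : A)) * dL K A D a u + crossMap (D (a ⊗ₜ[K] b) ⊗ₜ[K] u) := by
  induction u using TensorProduct.induction_on with
  | zero => simp
  | tmul p q =>
      rw [Algebra.TensorProduct.tmul_mul_tmul, one_mul, dL_tmul, hL1 a b p,
        TensorProduct.add_tmul, tmul_mul_left, mul_oneone_tmul, dL_tmul]
  | add u v hu hv =>
      rw [mul_add, map_add, hu, hv, map_add, mul_add, TensorProduct.tmul_add, map_add]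
      abel

lemma dL_mul_right (a c : A) (u : A ⊗[K] A) :
    dL K A D a (u * ((1 : A) ⊗ₜ[K] c)) =
      dL K A D a u * (((1 : A) ⊗ₜ[K] (1 : A)) ⊗ₜ[K] c) := by
  induction u using TensorProduct.induction_on with
  | zero => simp
  | tmul p q =>
      rw [Algebra.TensorProduct.tmul_mul_tmul, mul_one, dL_tmul, tmul_mul_right, dL_tmul]
  | add u v hu hv => rw [add_mul, map_add, hu, hv, map_add, add_mul]

lemma dR_mul_left (a b : A) (u : A ⊗[K] A) :
    dR K A D a ((b ⊗ₜ[K] (1 : A)) * u) =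
      ((b ⊗ₜ[K] (1 : A)) ⊗ₜ[K] (1 : A)) * dR K A D a u := by
  induction u using TensorProduct.induction_on with
  | zero => simp
  | tmul p q =>
      rw [Algebra.TensorProduct.tmul_mul_tmul, one_mul, dR_tmul, asymm_mul_left, dR_tmul]
  | add u v hu hv => rw [mul_add, map_add, hu, hv, map_add, mul_add]

include hL1 in
lemma dR_mul_right (a c : A) (u : A ⊗[K] A) :
    dR K A D a (u * ((1 : A) ⊗ₜ[K] c)) =
      dR K A D a u * (((1 : A) ⊗ₜ[K] (1 : A)) ⊗ₜ[K] c) + crossMap (u ⊗ₜ[K] D (a ⊗ₜ[K] c)) := by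
  induction u using TensorProduct.induction_on with
  | zero => simp
  | tmul p q =>
      rw [Algebra.TensorProduct.tmul_mul_tmul, mul_one, dR_tmul, hL1 a q c,
        TensorProduct.tmul_add, map_add, asymm_cross, asymm_mul_right, dR_tmul, add_comm]
  | add u v hu hv =>
      rw [add_mul, map_add, hu, hv, map_add, add_mul, TensorProduct.add_tmul, map_add]
      abel

lemma dLfst_tmul' (c p q : A) :
    dLfst K A D c (p ⊗ₜ[K] q) = otimes1 K A q (D (p ⊗ₜ[K] c)) := by
  rw [dLfst_tmul, swap23_eq_otimes1]

include hL1 in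
lemma dLfst_mul (b c : A) (w : A ⊗[K] A) :
    dLfst K A D (b * c) w =
      ((b ⊗ₜ[K] (1 : A)) ⊗ₜ[K] (1 : A)) * dLfst K A D c w +
        dLfst K A D b w * (((1 : A) ⊗ₜ[K] (1 : A)) ⊗ₜ[K] c) := by
  induction w using TensorProduct.induction_on with
  | zero => simp
  | tmul p q =>
      rw [dLfst_tmul, hL1 p b c, TensorProduct.add_tmul, map_add, swap23_mul_left,
        swap23_mul_right, dLfst_tmul, dLfst_tmul]
  | add u v hu hv =>
      rw [map_add, hu, hv, map_add, map_add, mul_add, add_mul]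
      abel

lemma dLfst_add_arg (b c : A) (w : A ⊗[K] A) :
    dLfst K A D (b + c) w = dLfst K A D b w + dLfst K A D c w := by
  induction w using TensorProduct.induction_on with
  | zero => simp
  | tmul p q => rw [dLfst_tmul', dLfst_tmul', dLfst_tmul', TensorProduct.tmul_add, map_add,
      map_add]
  | add u v hu hv => rw [map_add, hu, hv, map_add, map_add]; abel

include hL1 in
lemma dLfst_algebraMap (r : K) (w : A ⊗[K] A) :
    dLfst K A D (algebraMap K A r) w = 0 := by
  induction w using TensorProduct.induction_on with
  | zero => simp
  | tmul p q => rw [dLfst_tmul', D_tmul_algebraMap hL1, map_zero]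
  | add u v hu hv => rw [map_add, hu, hv, add_zero]

end Aux2
section Main

set_option synthInstance.maxHeartbeats 800000
set_option maxHeartbeats 1000000

variable {K : Type*} [Field K]
variable {A : Type*} [Ring A] [Algebra K A]

/-- The statement we prove by induction on `c`. -/
def Pq (D : A ⊗[K] A →ₗ[K] A ⊗[K] A) (x y : A) (α β : K) (c : A) : Prop :=
  -(dL K A D y (D (x ⊗ₜ[K] c))) + dR K A D x (D (y ⊗ₜ[K] c)) -
      dLfst K A D c (flipT K A (D (x ⊗ₜ[K] y))) =
    α • otimes1 K A y (D (x ⊗ₜ[K] c)) +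
      β • otimes1 K A (1 : A) (D (x ⊗ₜ[K] c) * (y ⊗ₜ[K] (1 : A)))

variable {D : A ⊗[K] A →ₗ[K] A ⊗[K] A}
variable (hL1 : ∀ a b c : A,
    D (a ⊗ₜ[K] (b * c)) =
      (b ⊗ₜ[K] (1 : A)) * D (a ⊗ₜ[K] c) + D (a ⊗ₜ[K] b) * ((1 : A) ⊗ₜ[K] c))
variable (hL2 : ∀ a b c : A,
    D ((a * b) ⊗ₜ[K] c) =
      ((1 : A) ⊗ₜ[K] a) * D (b ⊗ₜ[K] c) + D (a ⊗ₜ[K] c) * (b ⊗ₜ[K] (1 : A)))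

include hL1 in
lemma Pq_algebraMap (x y : A) (α β : K) (r : K) : Pq D x y α β (algebraMap K A r) := by
  unfold Pq
  rw [D_tmul_algebraMap hL1, D_tmul_algebraMap hL1, dLfst_algebraMap hL1]
  simp

include hL2 in
lemma Pq_gen (x y vk : A) (α β : K)
    (hmix' : D (y ⊗ₜ[K] x) + flipT K A (D (x ⊗ₜ[K] y)) =
      α • (y ⊗ₜ[K] x - x ⊗ₜ[K] y) +
        β • ((1 : A) ⊗ₜ[K] (y * x) - (x * y) ⊗ₜ[K] (1 : A)))
    (hDJ : DJac K A D y x vk =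
      (-α) • otimes1 K A x (D (y ⊗ₜ[K] vk)) +
        β • otimes1 K A (1 : A) (((1 : A) ⊗ₜ[K] x) * D (y ⊗ₜ[K] vk))) :
    Pq D x y α β vk := by
  unfold Pq
  have hback : flipT K A (D (x ⊗ₜ[K] y)) =
      α • (y ⊗ₜ[K] x - x ⊗ₜ[K] y) +
        β • ((1 : A) ⊗ₜ[K] (y * x) - (x * y) ⊗ₜ[K] (1 : A)) - D (y ⊗ₜ[K] x) :=
    eq_sub_of_add_eq' hmix'
  rw [DJac] at hDJ
  have ht : dLfst K A D vk (D (y ⊗ₜ[K] x)) =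
      dL K A D y (D (x ⊗ₜ[K] vk)) - dR K A D x (D (y ⊗ₜ[K] vk)) -
        ((-α) • otimes1 K A x (D (y ⊗ₜ[K] vk)) +
          β • otimes1 K A (1 : A) (((1 : A) ⊗ₜ[K] x) * D (y ⊗ₜ[K] vk))) :=
    eq_sub_of_add_eq' (sub_eq_iff_eq_add.mp hDJ).symm
  rw [hback, map_sub, map_add, map_smul, map_smul, map_sub, map_sub, ht,
    dLfst_tmul', dLfst_tmul', dLfst_tmul', dLfst_tmul', D_one_tmul hL2, map_zero,
    hL2 x y vk, map_add]
  module

include hL1 in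
lemma Pq_mul (x y : A) (α β : K) (b c : A)
    (hb : Pq D x y α β b) (hc : Pq D x y α β c) : Pq D x y α β (b * c) := by
  unfold Pq at *
  have hcomm : ((1 : A) ⊗ₜ[K] c) * (y ⊗ₜ[K] (1 : A)) = (y ⊗ₜ[K] (1 : A)) * ((1 : A) ⊗ₜ[K] c) := by
    rw [Algebra.TensorProduct.tmul_mul_tmul, Algebra.TensorProduct.tmul_mul_tmul,
      one_mul, mul_one, one_mul, mul_one]
  calc
    -(dL K A D y (D (x ⊗ₜ[K] (b * c)))) + dR K A D x (D (y ⊗ₜ[K] (b * c))) -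
        dLfst K A D (b * c) (flipT K A (D (x ⊗ₜ[K] y)))
      = ((b ⊗ₜ[K] (1 : A)) ⊗ₜ[K] (1 : A)) *
          (-(dL K A D y (D (x ⊗ₜ[K] c))) + dR K A D x (D (y ⊗ₜ[K] c)) -
            dLfst K A D c (flipT K A (D (x ⊗ₜ[K] y)))) +
        (-(dL K A D y (D (x ⊗ₜ[K] b))) + dR K A D x (D (y ⊗ₜ[K] b)) -
            dLfst K A D b (flipT K A (D (x ⊗ₜ[K] y)))) *
          (((1 : A) ⊗ₜ[K] (1 : A)) ⊗ₜ[K] c) := by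
        rw [hL1 x b c, hL1 y b c, map_add, map_add, dL_mul_left hL1, dL_mul_right,
          dR_mul_left, dR_mul_right hL1, dLfst_mul hL1]
        noncomm_ring
        simp only [mul_smul_comm, smul_mul_assoc]
        abel
    _ = ((b ⊗ₜ[K] (1 : A)) ⊗ₜ[K] (1 : A)) *
          (α • otimes1 K A y (D (x ⊗ₜ[K] c)) +
            β • otimes1 K A (1 : A) (D (x ⊗ₜ[K] c) * (y ⊗ₜ[K] (1 : A)))) +
        (α • otimes1 K A y (D (x ⊗ₜ[K] b)) +
            β • otimes1 K A (1 : A) (D (x ⊗ₜ[K] b) * (y ⊗ₜ[K] (1 : A)))) *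
          (((1 : A) ⊗ₜ[K] (1 : A)) ⊗ₜ[K] c) := by rw [hb, hc]
    _ = α • otimes1 K A y (D (x ⊗ₜ[K] (b * c))) +
          β • otimes1 K A (1 : A) (D (x ⊗ₜ[K] (b * c)) * (y ⊗ₜ[K] (1 : A))) := by
        rw [hL1 x b c]
        simp only [map_add, smul_add]
        rw [add_mul (b ⊗ₜ[K] (1 : A) * D (x ⊗ₜ[K] c)) (D (x ⊗ₜ[K] b) * ((1 : A) ⊗ₜ[K] c))
            (y ⊗ₜ[K] (1 : A)),
          mul_assoc (b ⊗ₜ[K] (1 : A)) (D (x ⊗ₜ[K] c)) (y ⊗ₜ[K] (1 : A)),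
          mul_assoc (D (x ⊗ₜ[K] b)) ((1 : A) ⊗ₜ[K] c) (y ⊗ₜ[K] (1 : A)), hcomm,
          ← mul_assoc (D (x ⊗ₜ[K] b)) (y ⊗ₜ[K] (1 : A)) ((1 : A) ⊗ₜ[K] c), map_add,
          otimes1_mul_left, otimes1_mul_left, otimes1_mul_right, otimes1_mul_right]
        simp only [mul_add, add_mul, smul_add, mul_smul_comm, smul_mul_assoc]
        abel

lemma Pq_add (x y : A) (α β : K) (b c : A)
    (hb : Pq D x y α β b) (hc : Pq D x y α β c) : Pq D x y α β (b + c) := by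
  unfold Pq at *
  calc
    -(dL K A D y (D (x ⊗ₜ[K] (b + c)))) + dR K A D x (D (y ⊗ₜ[K] (b + c))) -
        dLfst K A D (b + c) (flipT K A (D (x ⊗ₜ[K] y)))
      = (-(dL K A D y (D (x ⊗ₜ[K] b))) + dR K A D x (D (y ⊗ₜ[K] b)) -
            dLfst K A D b (flipT K A (D (x ⊗ₜ[K] y)))) +
        (-(dL K A D y (D (x ⊗ₜ[K] c))) + dR K A D x (D (y ⊗ₜ[K] c)) -
            dLfst K A D c (flipT K A (D (x ⊗ₜ[K] y)))) := by
        rw [TensorProduct.tmul_add, TensorProduct.tmul_add, map_add, map_add, map_add, map_add,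
          dLfst_add_arg]
        abel
    _ = (α • otimes1 K A y (D (x ⊗ₜ[K] b)) +
            β • otimes1 K A (1 : A) (D (x ⊗ₜ[K] b) * (y ⊗ₜ[K] (1 : A)))) +
        (α • otimes1 K A y (D (x ⊗ₜ[K] c)) +
            β • otimes1 K A (1 : A) (D (x ⊗ₜ[K] c) * (y ⊗ₜ[K] (1 : A)))) := by rw [hb, hc]
    _ = α • otimes1 K A y (D (x ⊗ₜ[K] (b + c))) +
          β • otimes1 K A (1 : A) (D (x ⊗ₜ[K] (b + c)) * (y ⊗ₜ[K] (1 : A))) := by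
        rw [TensorProduct.tmul_add, map_add, add_mul, map_add, map_add, smul_add, smul_add]
        abel

end Main

set_option maxHeartbeats 1000000 in
theorem stmt8 {K : Type*} [Field K] [IsAlgClosed K] [CharZero K]
    {d : ℕ} (hd : 1 ≤ d) (lam : Fin d → K)
    (D : FreeAlgebra K (Fin d) ⊗[K] FreeAlgebra K (Fin d) →ₗ[K] FreeAlgebra K (Fin d) ⊗[K] FreeAlgebra K (Fin d))
    (hD : IsMixedDoublePoisson K (FreeAlgebra K (Fin d)) (FreeAlgebra.ι K) lam D) :
    ∀ (i j : Fin d) (c : FreeAlgebra K (Fin d)),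
      -(dL K (FreeAlgebra K (Fin d)) D (FreeAlgebra.ι K j) (D (FreeAlgebra.ι K i ⊗ₜ[K] c))) +
        dR K (FreeAlgebra K (Fin d)) D (FreeAlgebra.ι K i) (D (FreeAlgebra.ι K j ⊗ₜ[K] c)) -
        dLfst K (FreeAlgebra K (Fin d)) D c
          (flipT K (FreeAlgebra K (Fin d)) (D (FreeAlgebra.ι K i ⊗ₜ[K] FreeAlgebra.ι K j))) =
      ((lam j + lam i) / 2) •
          otimes1 K (FreeAlgebra K (Fin d)) (FreeAlgebra.ι K j) (D (FreeAlgebra.ι K i ⊗ₜ[K] c)) +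
        ((lam j - lam i) / 2) •
          otimes1 K (FreeAlgebra K (Fin d)) (1 : FreeAlgebra K (Fin d))
            (D (FreeAlgebra.ι K i ⊗ₜ[K] c) * (FreeAlgebra.ι K j ⊗ₜ[K] (1 : FreeAlgebra K (Fin d)))) := by
  obtain ⟨⟨⟨hL1, hL2⟩, hmix⟩, hpois⟩ := hD
  intro i j c
  have key : Pq D (FreeAlgebra.ι K i) (FreeAlgebra.ι K j)
      ((lam j + lam i) / 2) ((lam j - lam i) / 2) c := by
    induction c using FreeAlgebra.induction with
    | grade0 r => exact Pq_algebraMap hL1 _ _ _ _ r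
    | grade1 k =>
        exact Pq_gen hL2 _ _ _ _ _ (hmix j i) (hpois j i k)
    | mul a b ha hb => exact Pq_mul hL1 _ _ _ _ _ _ ha hb
    | add a b ha hb => exact Pq_add _ _ _ _ _ _ ha hb
  exact key
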